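/- Let h(p) = −p·log₂ p − (1−p)·log₂(1−p) for p ∈ (0,1), with h(0) = h(1) = 0. Then 1 − h(1/4) is the greatest element of the set { 1 − h((1−x)/2) − max( h((1−u)/2), h((1−v)/2) ) : x ∈ [−1,1], u ∈ [0,1], v ∈ [0,1], x² + 2·min(u,v) ≤ 2 }; that is, every element of the set is ≤ 1 − h(1/4), and this value is attained (e.g., at x = 1, u = v = 1/2). -/

import Mathlib

/-- Binary entropy with logarithm base 2 (by convention `h 0 = h 1 = 0`,
which holds automatically since `Real.logb 2 0 = 0`). -/
noncomputable def binEnt (p : ℝ) : ℝ :=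
  -(p * Real.logb 2 p) - (1 - p) * Real.logb 2 (1 - p)

lemma binEnt_eq (p : ℝ) : binEnt p = Real.binEntropy p / Real.log 2 := by
  unfold binEnt Real.binEntropy
  rw [Real.log_inv, Real.log_inv, Real.logb, Real.logb]
  ring

lemma log_two_pos' : (0:ℝ) < Real.log 2 := Real.log_pos (by norm_num)

lemma binEnt_zero : binEnt 0 = 0 := by simp [binEnt]

lemma binEnt_half : binEnt (1/2) = 1 := by
  rw [binEnt_eq, show (1:ℝ)/2 = 2⁻¹ by norm_num, Real.binEntropy_two_inv,
    div_self log_two_pos'.ne']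

lemma binEnt_nonneg {p : ℝ} (h0 : 0 ≤ p) (h1 : p ≤ 1) : 0 ≤ binEnt p := by
  rw [binEnt_eq]
  exact div_nonneg (Real.binEntropy_nonneg h0 h1) log_two_pos'.le

lemma binEnt_symm (p : ℝ) : binEnt (1 - p) = binEnt p := by
  rw [binEnt_eq, binEnt_eq, Real.binEntropy_one_sub]

lemma binEnt_le_one (p : ℝ) : binEnt p ≤ 1 := by
  rw [binEnt_eq]
  rw [div_le_one log_two_pos']
  exact Real.binEntropy_le_log_two

lemma binEnt_monoOn : MonotoneOn binEnt (Set.Icc (0:ℝ) (1/2)) := by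
  have : MonotoneOn Real.binEntropy (Set.Icc (0:ℝ) 2⁻¹) :=
    Real.binEntropy_strictMonoOn.monotoneOn
  intro a ha b hb hab
  rw [binEnt_eq, binEnt_eq, div_le_div_iff_of_pos_right log_two_pos']
  exact this (by simpa using ha) (by simpa using hb) hab

lemma binEnt_concaveOn : ConcaveOn ℝ (Set.Icc (0:ℝ) 1) binEnt := by
  have h := (Real.strictConcave_binEntropy.concaveOn).smul
    (c := (Real.log 2)⁻¹) (by positivity)
  have e : binEnt = fun x => (Real.log 2)⁻¹ • Real.binEntropy x := by
    funext p
    simp [binEnt_eq, Pi.smul_apply, smul_eq_mul, div_eq_inv_mul]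
  rw [e]; exact h

lemma binEnt_quarter_ge : (1/2 : ℝ) ≤ binEnt (1/4) := by
  have hl : Real.log (1/4 : ℝ) = -(2 * Real.log 2) := by
    rw [show (1/4:ℝ) = ((2:ℝ)^(2:ℕ))⁻¹ by norm_num, Real.log_inv, Real.log_pow]
    push_cast; ring
  have h4 : Real.logb 2 (1/4 : ℝ) = -2 := by
    rw [Real.logb, hl]; field_simp
  have h34 : Real.logb 2 (3/4 : ℝ) ≤ 0 :=
    Real.logb_nonpos (by norm_num) (by norm_num) (by norm_num)
  unfold binEnt
  rw [h4, show (1:ℝ) - 1/4 = 3/4 by norm_num]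
  nlinarith

/-- chord from (0,0) to (1/4, c) -/
lemma chord1 {q : ℝ} (h0 : 0 ≤ q) (h1 : q ≤ 1/4) :
    4 * q * binEnt (1/4) ≤ binEnt q := by
  have := binEnt_concaveOn.2 (Set.mem_Icc.mpr ⟨le_refl (0:ℝ), zero_le_one⟩)
    (Set.mem_Icc.mpr ⟨by norm_num, by norm_num⟩ : (1/4:ℝ) ∈ _)
    (show (0:ℝ) ≤ 1 - 4*q by linarith) (show (0:ℝ) ≤ 4*q by linarith) (by ring)
  simp only [smul_eq_mul, binEnt_zero, mul_zero, zero_add] at this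
  have hq : 4*q * (1/4 : ℝ) = q := by ring
  rw [hq] at this
  linarith

/-- chord from (1/4, c) to (1/2, 1) -/
lemma chord2 {q : ℝ} (h0 : 1/4 ≤ q) (h1 : q ≤ 1/2) :
    (2 - 4*q) * binEnt (1/4) + (4*q - 1) ≤ binEnt q := by
  have := binEnt_concaveOn.2 (Set.mem_Icc.mpr ⟨by norm_num, by norm_num⟩ : (1/4:ℝ) ∈ _)
    (Set.mem_Icc.mpr ⟨by norm_num, by norm_num⟩ : (1/2:ℝ) ∈ _)
    (show (0:ℝ) ≤ 2 - 4*q by linarith) (show (0:ℝ) ≤ 4*q - 1 by linarith) (by ring)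
  simp only [smul_eq_mul, binEnt_half, mul_one] at this
  have hq : (2 - 4*q) * (1/4 : ℝ) + (4*q - 1) * (1/2 : ℝ) = q := by ring
  rw [hq] at this
  linarith

lemma aux_half {q : ℝ} (h0 : 0 ≤ q) (h1 : q ≤ 1/2) :
    4 * binEnt (1/4) * q * (1 - q) ≤ binEnt q := by
  set c := binEnt (1/4) with hc
  have hc1 : c ≤ 1 := binEnt_le_one _
  have hc2 : (1/2:ℝ) ≤ c := binEnt_quarter_ge
  rcases le_or_gt q (1/4) with h | h
  · have := chord1 h0 h
    nlinarith [mul_nonneg (by linarith : (0:ℝ) ≤ c) (sq_nonneg q)]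
  · have := chord2 h.le h1
    nlinarith [sq_nonneg (2*c*q - (2*c - 1)), mul_nonneg (by linarith : (0:ℝ) ≤ 2*c - 1) (by linarith : (0:ℝ) ≤ 1 - c)]

lemma aux_full {q : ℝ} (h0 : 0 ≤ q) (h1 : q ≤ 1) :
    4 * binEnt (1/4) * q * (1 - q) ≤ binEnt q := by
  rcases le_or_gt q (1/2) with h | h
  · exact aux_half h0 h
  · have := aux_half (q := 1 - q) (by linarith) (by linarith)
    rw [binEnt_symm] at this
    linarith [this]

lemma key {q p : ℝ} (hq0 : 0 ≤ q) (hq1 : q ≤ 1) (hp0 : 0 ≤ p) (hp1 : p ≤ 1/2)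
    (hcon : (1 - 2*q)^2 ≤ 4 * p) :
    binEnt (1/4) ≤ binEnt q + binEnt p := by
  set c := binEnt (1/4) with hc
  have hc2 : (1/2:ℝ) ≤ c := binEnt_quarter_ge
  rcases le_or_gt (1/4) p with h | h
  · have h1 : c ≤ binEnt p := binEnt_monoOn (by norm_num) (by constructor <;> linarith) h
    have h2 : 0 ≤ binEnt q := binEnt_nonneg hq0 hq1
    linarith
  · have hchord := chord1 hp0 h.le
    have hq := aux_full hq0 hq1
    nlinarith [mul_le_mul_of_nonneg_left hcon (by linarith : (0:ℝ) ≤ c)]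

/-- **Maximal tripartite BB84 key rate in a three-node pair-entangled network.**
`1 − h(1/4)` is the greatest element of the set of values
`1 − h((1−x)/2) − max (h((1−u)/2)) (h((1−v)/2))` over `x ∈ [−1,1]`, `u, v ∈ [0,1]`
subject to the network constraint `x² + 2·min u v ≤ 2`. -/
theorem stmt2 :
    IsGreatest
      { r : ℝ | ∃ x u v : ℝ, x ∈ Set.Icc (-1 : ℝ) 1 ∧ u ∈ Set.Icc (0 : ℝ) 1 ∧
          v ∈ Set.Icc (0 : ℝ) 1 ∧ x ^ 2 + 2 * min u v ≤ 2 ∧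
          r = 1 - binEnt ((1 - x) / 2) - max (binEnt ((1 - u) / 2)) (binEnt ((1 - v) / 2)) }
      (1 - binEnt (1 / 4)) := by
  constructor
  · refine ⟨1, 1/2, 1/2, by norm_num, by norm_num, by norm_num, by norm_num, ?_⟩
    norm_num [binEnt_zero]
  · rintro r ⟨x, u, v, hx, hu, hv, hcon, rfl⟩
    obtain ⟨hx1, hx2⟩ := hx
    obtain ⟨hu1, hu2⟩ := hu
    obtain ⟨hv1, hv2⟩ := hv
    set q := (1 - x) / 2 with hqdef
    set p := (1 - min u v) / 2 with hpdef
    have hmax : binEnt p ≤ max (binEnt ((1 - u) / 2)) (binEnt ((1 - v) / 2)) := by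
      rcases min_choice u v with h | h
      · rw [hpdef, h]; exact le_max_left _ _
      · rw [hpdef, h]; exact le_max_right _ _
    have hmin0 : 0 ≤ min u v := le_min hu1 hv1
    have hmin1 : min u v ≤ 1 := (min_le_left u v).trans hu2
    have hkey := key (q := q) (p := p) (by rw [hqdef]; linarith) (by rw [hqdef]; linarith)
      (by rw [hpdef]; linarith) (by rw [hpdef]; linarith)
      (by rw [hqdef, hpdef]; nlinarith)
    linarith
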